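/- For integers k ≥ 1 and m ≥ 0, the integral Ω(k,m) := ∫_0^1 ln^k(1−x)·ln^m(x)/x dx satisfies Ω(k,m) = (−1)^{m+k} m!·k! · Σ_{n=k}^∞ |S_1(n,k)|/(n!·n^{m+1}). -/

import Mathlib

open Real Finset intervalIntegral

section stmt15Aux
open Polynomial Set MeasureTheory


noncomputable def Pn (n : ℕ) : Polynomial ℝ := ∏ i ∈ Finset.range n, (X - C (i:ℝ))

noncomputable def sg (n l : ℕ) : ℝ := (Pn n).coeff l

noncomputable def aa (n l : ℕ) : ℝ := (-1:ℝ)^(n+l) * sg n l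

lemma Pn_succ (n : ℕ) : Pn (n+1) = Pn n * (X - C (n:ℝ)) := by
  rw [Pn, Finset.prod_range_succ]; rfl

lemma sg_succ (n l : ℕ) : sg (n+1) (l+1) = sg n l - n * sg n (l+1) := by
  simp only [sg, Pn_succ, mul_sub, coeff_sub, coeff_mul_X, coeff_mul_C]
  ring

lemma sg_zero {n : ℕ} (hn : 1 ≤ n) : sg n 0 = 0 := by
  rw [sg, coeff_zero_eq_eval_zero, Pn, eval_prod]
  refine Finset.prod_eq_zero (Finset.mem_range.2 hn) ?_
  simp

lemma sg0 (l : ℕ) : sg 0 l = if l = 0 then 1 else 0 := by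
  simp [sg, Pn, Polynomial.coeff_one, eq_comm]

lemma aa_succ (n l : ℕ) : aa (n+1) (l+1) = aa n l + n * aa n (l+1) := by
  simp only [aa, sg_succ]
  have h1 : (-1:ℝ)^(n+1+(l+1)) = (-1)^(n+l) := by ring
  have h2 : (-1:ℝ)^(n+(l+1)) = -(-1)^(n+l) := by ring
  rw [h1, h2]; ring

lemma aa_nonneg (n l : ℕ) : 0 ≤ aa n l := by
  induction n generalizing l with
  | zero => rw [aa, sg0]; split <;> simp_all
  | succ n ih =>
    cases l with
    | zero =>
      rcases Nat.eq_zero_or_pos n with h | h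
      · subst h; simp [aa, sg, Pn]
      · simp [aa, sg_zero (by omega : 1 ≤ n + 1)]
    | succ l => rw [aa_succ]; exact add_nonneg (ih l) (mul_nonneg (Nat.cast_nonneg n) (ih (l+1)))

lemma abs_sg (n l : ℕ) : |sg n l| = aa n l := by
  have h := abs_of_nonneg (aa_nonneg n l)
  rw [aa, abs_mul, abs_pow, abs_neg, abs_one, one_pow, one_mul] at h
  rw [h, aa]

lemma aa_eq_zero_of_lt {n l : ℕ} (h : n < l) : aa n l = 0 := by
  have hm : (Pn n).Monic := monic_prod_of_monic _ _ (fun i _ => monic_X_sub_C _)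
  have hd : (Pn n).natDegree = n := by
    rw [Pn, natDegree_prod_of_monic _ _ (fun i _ => monic_X_sub_C _)]
    simp only [Polynomial.natDegree_X_sub_C, Finset.sum_const, Finset.card_range, smul_eq_mul, mul_one]
  rw [aa, sg, coeff_eq_zero_of_natDegree_lt (by omega), mul_zero]

lemma aa_one {n : ℕ} (hn : 1 ≤ n) : aa n 1 = (n-1).factorial := by
  induction n with
  | zero => omega
  | succ n ih =>
    rcases Nat.eq_zero_or_pos n with h | h
    · subst h; norm_num [aa, sg, Pn]
    · have h0 : aa n 0 = 0 := by
        simp [aa, sg_zero h]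
      rw [show n + 1 - 1 = n by omega, aa_succ, h0, ih h, zero_add]
      rw [show n = (n - 1) + 1 by omega, Nat.factorial_succ]
      push_cast [show n - 1 + 1 = n by omega]
      ring

lemma aa_key (k n : ℕ) :
    (n.factorial : ℝ) * ∑ j ∈ Finset.range (n+1), aa j k / j.factorial = aa (n+1) (k+1) := by
  induction n with
  | zero => simp [aa_succ]
  | succ n ih =>
    rw [aa_succ, ← ih, Finset.sum_range_succ]
    rw [Nat.factorial_succ]
    push_cast
    have : (n.factorial : ℝ) ≠ 0 := Nat.cast_ne_zero.2 (Nat.factorial_ne_zero n)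
    field_simp
    ring

lemma sg_eq_S1 (S1 : ℕ → ℕ → ℝ)
    (hS1 : ∀ n : ℕ, 1 ≤ n → ∀ x : ℝ,
      ∏ i ∈ Finset.range n, (x - (i : ℝ)) = ∑ l ∈ Finset.Icc 1 n, S1 n l * x ^ l)
    {n l : ℕ} (h1 : 1 ≤ l) (h2 : l ≤ n) : sg n l = S1 n l := by
  have hpq : Pn n = ∑ l ∈ Finset.Icc 1 n, Polynomial.C (S1 n l) * Polynomial.X ^ l := by
    apply Polynomial.funext
    intro r
    rw [Pn, eval_prod, eval_finset_sum]
    simpa using hS1 n (le_trans h1 h2) r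
  rw [sg, hpq, finset_sum_coeff]
  simp only [coeff_C_mul, coeff_X_pow]
  rw [Finset.sum_eq_single l]
  · simp
  · intro b _ hb; simp [Ne.symm hb]
  · intro h; exact absurd (Finset.mem_Icc.2 ⟨h1, h2⟩) h



noncomputable def AA (k n : ℕ) : ℝ := k.factorial * aa n k / n.factorial

lemma AA_nonneg (k n : ℕ) : 0 ≤ AA k n := by
  have := aa_nonneg n k
  unfold AA; positivity

lemma AA_zero {k n : ℕ} (h : n < k) : AA k n = 0 := by
  simp [AA, aa_eq_zero_of_lt h]

lemma AA_one (n : ℕ) : AA 1 (n+1) = 1 / (n+1) := by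
  rw [AA, aa_one (by omega), Nat.factorial_one, Nat.add_sub_cancel, Nat.factorial_succ]
  push_cast
  have h1 : (n.factorial : ℝ) ≠ 0 := Nat.cast_ne_zero.2 (Nat.factorial_ne_zero n)
  field_simp

lemma AA_succ (k n : ℕ) :
    AA (k+1) (n+1) = ((k:ℝ)+1) / ((n:ℝ)+1) * ∑ j ∈ Finset.range (n+1), AA k j := by
  have h := aa_key k n
  have hsum : ∑ j ∈ Finset.range (n+1), AA k j
      = (k.factorial : ℝ) * ∑ j ∈ Finset.range (n+1), aa j k / j.factorial := by
    rw [Finset.mul_sum]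
    exact Finset.sum_congr rfl fun j _ => by rw [AA, mul_div_assoc]
  rw [AA, hsum, Nat.factorial_succ k, Nat.factorial_succ n, ← h]
  have h1 : (n.factorial : ℝ) ≠ 0 := Nat.cast_ne_zero.2 (Nat.factorial_ne_zero n)
  push_cast
  field_simp

lemma hasSum_AA {k : ℕ} (hk : 1 ≤ k) {x : ℝ} (hx0 : 0 ≤ x) (hx1 : x < 1) :
    HasSum (fun n => AA k n * x^n) ((-Real.log (1-x))^k) := by
  induction k, hk using Nat.le_induction generalizing x with
  | base =>
    have h := Real.hasSum_pow_div_log_of_abs_lt_one (x := x) (by rw [abs_of_nonneg hx0]; exact hx1)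
    have h2 : HasSum (fun n => AA 1 (n+1) * x^(n+1)) (-Real.log (1-x)) := by
      refine h.congr_fun fun n => ?_
      rw [AA_one]
      push_cast
      ring
    have := (hasSum_nat_add_iff (f := fun n => AA 1 n * x^n) 1).1 (by simpa using h2)
    simpa [AA_zero (show (0:ℕ) < 1 by omega)] using this
  | succ k hk1 ih =>
    -- Cauchy product: partial sums series
    have hcauchy : ∀ t : ℝ, 0 ≤ t → t < 1 →
        HasSum (fun n => (∑ j ∈ Finset.range (n+1), AA k j) * t^n)
          ((-Real.log (1-t))^k * (1-t)⁻¹) := by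
      intro t ht0 ht1
      have hf := ih ht0 ht1
      have hfn : Summable fun n => ‖AA k n * t^n‖ := by
        refine hf.summable.congr fun n => ?_
        rw [Real.norm_eq_abs, abs_of_nonneg (mul_nonneg (AA_nonneg k n) (by positivity))]
      have hgn : Summable fun n => ‖t^n‖ := by
        refine (summable_geometric_of_lt_one ht0 ht1).congr fun n => ?_
        rw [Real.norm_eq_abs, abs_of_nonneg (by positivity)]
      have hc := hasSum_sum_range_mul_of_summable_norm hfn hgn
      rw [hf.tsum_eq, (hasSum_geometric_of_lt_one ht0 ht1).tsum_eq] at hc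
      refine hc.congr_fun fun n => ?_
      rw [Finset.sum_mul]
      refine Finset.sum_congr rfl fun j hj => ?_
      rw [Finset.mem_range] at hj
      rw [mul_assoc, ← pow_add]
      congr 2
      omega
    -- FTC: integral of (-log(1-t))^k/(1-t) from 0 to x
    have hcont : ContinuousOn (fun t : ℝ => (-Real.log (1-t))^k * (1-t)⁻¹) (Set.uIcc 0 x) := by
      have hsub : Set.uIcc (0:ℝ) x ⊆ {t : ℝ | 1 - t ≠ 0} := by
        intro t ht
        rw [Set.uIcc_of_le hx0] at ht
        have := ht.2
        simp only [Set.mem_setOf_eq]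
        intro h
        nlinarith [ht.1, ht.2]
      refine ContinuousOn.mul (ContinuousOn.pow ?_ _) ?_
      · exact ((continuousOn_const.sub continuousOn_id).log (fun t ht => hsub ht)).neg
      · exact (continuousOn_const.sub continuousOn_id).inv₀ (fun t ht => hsub ht)
    have hftc : ∫ t in (0:ℝ)..x, (-Real.log (1-t))^k * (1-t)⁻¹
        = (-Real.log (1-x))^(k+1) / (k+1) := by
      have hderiv : ∀ t ∈ Set.uIcc (0:ℝ) x,
          HasDerivAt (fun u : ℝ => (-Real.log (1-u))^(k+1) / (k+1))
            ((-Real.log (1-t))^k * (1-t)⁻¹) t := by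
        intro t ht
        rw [Set.uIcc_of_le hx0] at ht
        have h1t : (1:ℝ) - t ≠ 0 := by nlinarith [ht.1, ht.2]
        have hL : HasDerivAt (fun u : ℝ => -Real.log (1-u)) ((1-t)⁻¹) t := by
          have h0 : HasDerivAt (fun u : ℝ => 1 - u) (-1) t := by
            simpa using (hasDerivAt_id t).const_sub 1
          have := (Real.hasDerivAt_log h1t).comp t h0
          refine this.neg.congr_deriv ?_
          ring
        have := (hL.pow (k+1)).div_const ((k:ℝ)+1)
        refine this.congr_deriv ?_
        push_cast
        have hk1 : (k:ℝ)+1 ≠ 0 := by positivity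
        field_simp
      rw [intervalIntegral.integral_eq_sub_of_hasDerivAt hderiv
        (hcont.intervalIntegrable)]
      simp
    -- termwise integration
    have hint : ∀ n : ℕ, MeasureTheory.Integrable
        (fun t : ℝ => (∑ j ∈ Finset.range (n+1), AA k j) * t^n)
        (MeasureTheory.volume.restrict (Set.Ioc 0 x)) := by
      intro n
      exact (continuous_const.mul (continuous_pow n)).integrableOn_Ioc
    set c : ℕ → ℝ := fun n => ∑ j ∈ Finset.range (n+1), AA k j with hc
    have hcnn : ∀ n, 0 ≤ c n := fun n => Finset.sum_nonneg fun j _ => AA_nonneg k j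
    have hval : ∀ n : ℕ, (∫ t in Set.Ioc (0:ℝ) x, c n * t^n) = c n * (x^(n+1)/(n+1)) := by
      intro n
      rw [← intervalIntegral.integral_of_le hx0, intervalIntegral.integral_const_mul,
        integral_pow]
      simp
    have hnormval : ∀ n : ℕ, (∫ t in Set.Ioc (0:ℝ) x, ‖c n * t^n‖) = c n * (x^(n+1)/(n+1)) := by
      intro n
      rw [← hval n]
      refine MeasureTheory.setIntegral_congr_fun measurableSet_Ioc fun t ht => ?_
      rw [Real.norm_eq_abs, abs_of_nonneg (mul_nonneg (hcnn n) (pow_nonneg ht.1.le n))]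
    have hwsum : Summable fun n => c n * (x^(n+1)/(n+1)) := by
      refine Summable.of_nonneg_of_le (fun n => mul_nonneg (hcnn n) (by positivity))
        (fun n => ?_) ((hcauchy x hx0 hx1).summable.mul_left x)
      rw [show x * (c n * x^n) = c n * (x * x^n) by ring, ← pow_succ']
      exact mul_le_mul_of_nonneg_left
        (div_le_self (pow_nonneg hx0 _) (le_add_of_nonneg_left (Nat.cast_nonneg n))) (hcnn n)
    have hFS := MeasureTheory.hasSum_integral_of_summable_integral_norm
      (μ := MeasureTheory.volume.restrict (Set.Ioc 0 x))
      (F := fun n => fun t : ℝ => c n * t^n) hint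
      (by simpa only [hnormval] using hwsum)
    have htsum_eq : (∫ t in Set.Ioc (0:ℝ) x, ∑' n, c n * t^n)
        = (-Real.log (1-x))^(k+1) / (k+1) := by
      rw [← hftc, intervalIntegral.integral_of_le hx0]
      refine MeasureTheory.setIntegral_congr_fun measurableSet_Ioc fun t ht => ?_
      exact (hcauchy t ht.1.le (lt_of_le_of_lt ht.2 hx1)).tsum_eq
    rw [htsum_eq] at hFS
    have hFS2 : HasSum (fun n => c n * (x^(n+1)/(n+1))) ((-Real.log (1-x))^(k+1) / (k+1)) := by
      refine hFS.congr_fun fun n => (hval n).symm ▸ rfl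
    have hFS3 := hFS2.mul_left ((k:ℝ)+1)
    have hne : ((k:ℝ)+1) ≠ 0 := by positivity
    rw [mul_div_cancel₀ _ hne] at hFS3
    have hFS4 : HasSum (fun n => AA (k+1) (n+1) * x^(n+1)) ((-Real.log (1-x))^(k+1)) := by
      refine hFS3.congr_fun fun n => ?_
      rw [AA_succ, show (∑ j ∈ Finset.range (n+1), AA k j) = c n from rfl]
      have hne' : ((n:ℝ)+1) ≠ 0 := by positivity
      push_cast
      field_simp
    have := (hasSum_nat_add_iff (f := fun n => AA (k+1) n * x^n) 1).1 (by simpa using hFS4)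
    simpa [AA_zero (show (0:ℕ) < k+1 by omega)] using this


lemma exp_neg_image : (fun t : ℝ => Real.exp (-t)) '' (Set.Ioi 0) = Set.Ioo 0 1 := by
  ext y
  constructor
  · rintro ⟨t, ht, rfl⟩
    exact ⟨Real.exp_pos _, by rwa [Real.exp_lt_one_iff, neg_lt_zero]⟩
  · rintro ⟨hy0, hy1⟩
    exact ⟨-Real.log y, by simpa using Real.log_neg hy0 hy1, by simp [Real.exp_log hy0]⟩

lemma exp_aux {n : ℕ} (hn : 1 ≤ n) (t : ℝ) :
    Real.exp (-t) * Real.exp (-t) ^ (n-1) = Real.exp (-((n:ℝ)*t)) := by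
  rw [← pow_succ', Nat.sub_add_cancel hn, ← Real.exp_nat_mul, mul_neg]

lemma integrable_pow_exp_neg_nat (m n : ℕ) (hn : 1 ≤ n) :
    IntegrableOn (fun t : ℝ => t^m * Real.exp (-((n:ℝ) * t))) (Set.Ioi 0) := by
  have hG := Real.GammaIntegral_convergent (s := (m:ℝ)+1) (by positivity)
  refine hG.mono' ?_ ?_
  · exact ((continuous_pow m).mul (((continuous_const.mul continuous_id).neg).rexp)).aestronglyMeasurable.restrict
  · filter_upwards [ae_restrict_mem measurableSet_Ioi] with t ht
    rw [Real.norm_eq_abs,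
      abs_of_nonneg (mul_nonneg (pow_nonneg (Set.mem_Ioi.1 ht).le m) (Real.exp_pos _).le)]
    have h1 : Real.exp (-((n:ℝ)*t)) ≤ Real.exp (-t) := by
      apply Real.exp_le_exp.2
      have : (1:ℝ) ≤ n := by exact_mod_cast hn
      nlinarith [le_of_lt (Set.mem_Ioi.1 ht)]
    calc t^m * Real.exp (-((n:ℝ)*t)) ≤ t^m * Real.exp (-t) :=
          mul_le_mul_of_nonneg_left h1 (pow_nonneg (le_of_lt ht) m)
      _ = Real.exp (-t) * t^((m:ℝ)+1-1) := by
          rw [mul_comm]; congr 1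
          rw [add_sub_cancel_right, Real.rpow_natCast]

lemma key_deriv : ∀ t ∈ Set.Ioi (0:ℝ),
    HasDerivWithinAt (fun t : ℝ => Real.exp (-t)) (-Real.exp (-t)) (Set.Ioi 0) t := by
  intro t _
  have : HasDerivAt (fun t : ℝ => Real.exp (-t)) (Real.exp (-t) * (-1)) t :=
    (Real.hasDerivAt_exp (-t)).comp t ((hasDerivAt_id t).neg)
  simpa [mul_comm] using this.hasDerivWithinAt

lemma key_inj : Set.InjOn (fun t : ℝ => Real.exp (-t)) (Set.Ioi 0) := by
  intro a _ b _ h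
  simpa using Real.exp_injective h

lemma key_int_integrable (n m : ℕ) (hn : 1 ≤ n) :
    IntegrableOn (fun x : ℝ => x^(n-1) * (-Real.log x)^m) (Set.Ioc 0 1) := by
  have h := (integrableOn_image_iff_integrableOn_abs_deriv_smul measurableSet_Ioi
    key_deriv key_inj (fun x : ℝ => x^(n-1) * (-Real.log x)^m))
  rw [exp_neg_image] at h
  have h2 : IntegrableOn (fun x : ℝ => x^(n-1) * (-Real.log x)^m) (Set.Ioo 0 1) := by
    rw [h]
    refine (integrable_pow_exp_neg_nat m n hn).congr_fun ?_ measurableSet_Ioi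
    intro t ht
    simp only [Real.log_exp, smul_eq_mul, neg_neg, abs_neg, Real.abs_exp]
    rw [← exp_aux hn t]
    ring
  exact h2.congr_set_ae Ioo_ae_eq_Ioc.symm

lemma key_int_val (n m : ℕ) (hn : 1 ≤ n) :
    ∫ x in Set.Ioc (0:ℝ) 1, x^(n-1) * (-Real.log x)^m
      = (m.factorial : ℝ) / (n:ℝ)^(m+1) := by
  have h := MeasureTheory.integral_image_eq_integral_abs_deriv_smul measurableSet_Ioi
    key_deriv key_inj (fun x : ℝ => x^(n-1) * (-Real.log x)^m)
  rw [exp_neg_image] at h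
  have e1 : ∫ x in Set.Ioc (0:ℝ) 1, x^(n-1) * (-Real.log x)^m
      = ∫ x in Set.Ioo (0:ℝ) 1, x^(n-1) * (-Real.log x)^m :=
    (MeasureTheory.setIntegral_congr_set Ioo_ae_eq_Ioc).symm
  rw [e1, h]
  have e2 : ∫ t in Set.Ioi (0:ℝ), |(-Real.exp (-t))| • ((Real.exp (-t))^(n-1) * (-Real.log (Real.exp (-t)))^m)
      = ∫ t in Set.Ioi (0:ℝ), t^((m:ℝ)+1-1) * Real.exp (-((n:ℝ)*t)) := by
    refine MeasureTheory.setIntegral_congr_fun measurableSet_Ioi fun t ht => ?_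
    simp only [Real.log_exp, smul_eq_mul, neg_neg, abs_neg, Real.abs_exp]
    rw [add_sub_cancel_right, Real.rpow_natCast, ← exp_aux hn t]
    ring
  rw [e2, Real.integral_rpow_mul_exp_neg_mul_Ioi (by positivity) (by exact_mod_cast hn)]
  rw [Real.Gamma_nat_eq_factorial m]
  rw [show ((m:ℝ)+1) = ((m+1 : ℕ) : ℝ) by push_cast; ring, Real.rpow_natCast]
  rw [one_div, inv_pow, ← one_div]
  field_simp



lemma partial_sum_le {k : ℕ} (hk : 1 ≤ k) (N : ℕ) (hN : 1 ≤ N) :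
    ∑ j ∈ Finset.range (N+1), AA k j ≤ Real.exp 1 * (Real.log (N+1))^k := by
  set x : ℝ := (N:ℝ)/((N:ℝ)+1) with hx
  have hN1 : (0:ℝ) < (N:ℝ)+1 := by positivity
  have hNpos : (0:ℝ) < N := by exact_mod_cast hN
  have hx0 : 0 ≤ x := by positivity
  have hx1 : x < 1 := by rw [hx, div_lt_one hN1]; linarith
  have hlog : -Real.log (1-x) = Real.log ((N:ℝ)+1) := by
    rw [hx, show 1 - (N:ℝ)/((N:ℝ)+1) = ((N:ℝ)+1)⁻¹ by field_simp; ring, Real.log_inv, neg_neg]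
  have hsum := hasSum_AA hk hx0 hx1
  have hpartial : ∑ j ∈ Finset.range (N+1), AA k j * x^j ≤ (Real.log ((N:ℝ)+1))^k := by
    rw [← hlog]
    exact sum_le_hasSum _ (fun j _ => mul_nonneg (AA_nonneg k j) (pow_nonneg hx0 j)) hsum
  have hxN : x^N * ∑ j ∈ Finset.range (N+1), AA k j ≤ ∑ j ∈ Finset.range (N+1), AA k j * x^j := by
    rw [Finset.mul_sum]
    refine Finset.sum_le_sum fun j hj => ?_
    rw [Finset.mem_range] at hj
    rw [mul_comm (x^N)]
    exact mul_le_mul_of_nonneg_left (pow_le_pow_of_le_one hx0 hx1.le (by omega)) (AA_nonneg k j)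
  have hxNe : Real.exp 1 * x^N ≥ 1 := by
    have h1 : ((N:ℝ)+1)/(N:ℝ) ≤ Real.exp ((N:ℝ)⁻¹) := by
      have h := Real.add_one_le_exp ((N:ℝ)⁻¹)
      calc ((N:ℝ)+1)/(N:ℝ) = (N:ℝ)⁻¹ + 1 := by field_simp; ring
        _ ≤ Real.exp ((N:ℝ)⁻¹) := h
    have h2 : (((N:ℝ)+1)/(N:ℝ))^N ≤ Real.exp 1 := by
      calc (((N:ℝ)+1)/(N:ℝ))^N ≤ (Real.exp ((N:ℝ)⁻¹))^N := by
            apply pow_le_pow_left₀ (by positivity) h1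
        _ = Real.exp ((N:ℝ)⁻¹ * N) := by rw [← Real.exp_nat_mul]; ring_nf
        _ = Real.exp 1 := by rw [inv_mul_cancel₀ (ne_of_gt hNpos)]
    have hxinv : x⁻¹ = ((N:ℝ)+1)/(N:ℝ) := by rw [hx]; field_simp
    have hxpos : 0 < x := by positivity
    have : (x⁻¹)^N ≤ Real.exp 1 := by rw [hxinv]; exact h2
    rw [inv_pow] at this
    calc (1:ℝ) = (x^N)⁻¹ * x^N := by field_simp
      _ ≤ Real.exp 1 * x^N := by
          apply mul_le_mul_of_nonneg_right this (by positivity)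
  have hnn : 0 ≤ ∑ j ∈ Finset.range (N+1), AA k j :=
    Finset.sum_nonneg fun j _ => AA_nonneg k j
  have hlogcast : Real.log ((N:ℝ)+1) = Real.log (((N:ℕ)+1 : ℕ):ℝ) := by push_cast; ring_nf
  calc ∑ j ∈ Finset.range (N+1), AA k j
      = 1 * ∑ j ∈ Finset.range (N+1), AA k j := by ring
    _ ≤ (Real.exp 1 * x^N) * ∑ j ∈ Finset.range (N+1), AA k j :=
        mul_le_mul_of_nonneg_right hxNe hnn
    _ = Real.exp 1 * (x^N * ∑ j ∈ Finset.range (N+1), AA k j) := by ring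
    _ ≤ Real.exp 1 * ∑ j ∈ Finset.range (N+1), AA k j * x^j :=
        mul_le_mul_of_nonneg_left hxN (Real.exp_pos 1).le
    _ ≤ Real.exp 1 * (Real.log ((N:ℝ)+1))^k :=
        mul_le_mul_of_nonneg_left hpartial (Real.exp_pos 1).le
    _ = Real.exp 1 * (Real.log (N+1))^k := by push_cast; ring_nf

lemma AA_le {k : ℕ} (hk : 1 ≤ k) {n : ℕ} (hn : 2 ≤ n) :
    AA k n ≤ Real.exp 1 * k * (Real.log n)^(k-1) / n := by
  obtain ⟨N, rfl⟩ : ∃ N, n = N + 1 := ⟨n-1, by omega⟩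
  have hN : 1 ≤ N := by omega
  obtain ⟨K, rfl⟩ : ∃ K, k = K + 1 := ⟨k-1, by omega⟩
  rcases Nat.eq_zero_or_pos K with hK | hK
  · subst hK
    rw [AA_one]
    simp only [Nat.add_sub_cancel, pow_zero]
    rw [div_le_div_iff₀ (by positivity) (by positivity)]
    push_cast
    nlinarith [Real.exp_one_gt_d9, Nat.cast_nonneg (α := ℝ) N]
  · rw [AA_succ]
    have hps := partial_sum_le hK N hN
    have hlognn : 0 ≤ Real.log ((N:ℝ)+1) := Real.log_nonneg (by push_cast; linarith [Nat.cast_nonneg (α := ℝ) N])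
    simp only [Nat.add_sub_cancel]
    calc ((K:ℝ)+1) / ((N:ℝ)+1) * ∑ j ∈ Finset.range (N+1), AA K j
        ≤ ((K:ℝ)+1) / ((N:ℝ)+1) * (Real.exp 1 * (Real.log (N+1))^K) := by
          apply mul_le_mul_of_nonneg_left hps (by positivity)
      _ = Real.exp 1 * ((K:ℝ)+1) * (Real.log ((N:ℕ)+1:ℕ))^K / ((N:ℕ)+1:ℕ) := by
          push_cast; ring
      _ ≤ Real.exp 1 * ((K:ℕ)+1:ℕ) * (Real.log ((N:ℕ)+1:ℕ))^K / ((N:ℕ)+1:ℕ) := by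
          push_cast; exact le_refl _

lemma summable_v {k : ℕ} (hk : 1 ≤ k) (m : ℕ) :
    Summable (fun n : ℕ => AA k n * ((m.factorial : ℝ) / (n:ℝ)^(m+1))) := by
  set C : ℝ := (m.factorial : ℝ) * (Real.exp 1 * k * (2*(k:ℝ))^(k-1)) + (m.factorial : ℝ) with hC
  have hCnn : 0 ≤ C := by positivity
  have hB : Summable (fun n : ℕ => C * ((n:ℝ)^(-(3/2) : ℝ))) :=
    (Real.summable_nat_rpow.2 (by norm_num)).mul_left C
  refine Summable.of_nonneg_of_le (fun n => ?_) (fun n => ?_) hB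
  · exact mul_nonneg (AA_nonneg k n) (by positivity)
  · match n with
    | 0 =>
      rw [AA_zero hk, zero_mul]
      positivity
    | 1 =>
      have hA1 : AA k 1 ≤ 1 := by
        rcases Nat.lt_or_ge 1 k with h | h
        · rw [AA_zero h]; norm_num
        · have hk1 : k = 1 := by omega
          subst hk1
          rw [show (1:ℕ) = 0 + 1 from rfl, AA_one]
          norm_num
      have h1 : AA k 1 * ((m.factorial : ℝ) / ((1:ℕ):ℝ)^(m+1)) ≤ (m.factorial : ℝ) := by
        simp only [Nat.cast_one, one_pow, div_one]
        calc AA k 1 * (m.factorial : ℝ) ≤ 1 * (m.factorial : ℝ) :=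
              mul_le_mul_of_nonneg_right hA1 (by positivity)
          _ = (m.factorial : ℝ) := one_mul _
      calc AA k 1 * ((m.factorial : ℝ) / ((1:ℕ):ℝ)^(m+1)) ≤ (m.factorial : ℝ) := h1
        _ ≤ C := by
            rw [hC]
            nlinarith [mul_nonneg (Nat.cast_nonneg (α := ℝ) m.factorial)
              (mul_nonneg (mul_nonneg (Real.exp_pos 1).le (Nat.cast_nonneg (α := ℝ) k))
                (pow_nonneg (by positivity : (0:ℝ) ≤ 2*(k:ℝ)) (k-1)))]
        _ = C * ((1:ℕ):ℝ)^(-(3/2) : ℝ) := by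
            rw [Nat.cast_one, Real.one_rpow, mul_one]
    | (n+2) =>
      set z : ℝ := ((n+2:ℕ):ℝ) with hz'
      have hz : (1:ℝ) ≤ z := by rw [hz']; exact_mod_cast (by omega : 1 ≤ n+2)
      have hz0 : (0:ℝ) < z := lt_of_lt_of_le one_pos hz
      have hkR : (0:ℝ) < (k:ℝ) := by exact_mod_cast hk
      have hε : (0:ℝ) < (2*(k:ℝ))⁻¹ := by positivity
      have h2 : Real.log z ≤ z^((2*(k:ℝ))⁻¹ : ℝ) * (2*(k:ℝ)) := by
        have := Real.log_le_rpow_div hz0.le hε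
        rwa [div_inv_eq_mul] at this
      have h3 : (Real.log z)^(k-1) ≤ (2*(k:ℝ))^(k-1) * z^((1:ℝ)/2) := by
        calc (Real.log z)^(k-1) ≤ (z^((2*(k:ℝ))⁻¹ : ℝ) * (2*(k:ℝ)))^(k-1) :=
              pow_le_pow_left₀ (Real.log_nonneg hz) h2 _
          _ = (2*(k:ℝ))^(k-1) * (z^((2*(k:ℝ))⁻¹ : ℝ))^((k-1 : ℕ)) := by
              rw [mul_pow]; ring
          _ = (2*(k:ℝ))^(k-1) * z^(((2*(k:ℝ))⁻¹ * (k-1 : ℕ)) : ℝ) := by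
              rw [← Real.rpow_natCast (z^((2*(k:ℝ))⁻¹ : ℝ)) (k-1), ← Real.rpow_mul hz0.le]
          _ ≤ (2*(k:ℝ))^(k-1) * z^((1:ℝ)/2) := by
              refine mul_le_mul_of_nonneg_left
                (Real.rpow_le_rpow_of_exponent_le hz ?_) (by positivity)
              have hle : ((k-1 : ℕ):ℝ) ≤ (k:ℝ) := by exact_mod_cast Nat.sub_le k 1
              calc (2*(k:ℝ))⁻¹ * ((k-1 : ℕ):ℝ) ≤ (2*(k:ℝ))⁻¹ * (k:ℝ) :=
                    mul_le_mul_of_nonneg_left hle hε.le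
                _ = 1/2 := by field_simp
      have hAle : AA k (n+2) ≤ Real.exp 1 * k * (Real.log z)^(k-1) / z := by
        have := AA_le hk (n := n+2) (by omega)
        rwa [hz']
      have hfrac : (m.factorial : ℝ) / z^(m+1) ≤ (m.factorial : ℝ) / z := by
        apply div_le_div_of_nonneg_left (by positivity) hz0
        exact le_self_pow₀ hz (by omega)
      have hmain : AA k (n+2) * ((m.factorial : ℝ) / z^(m+1))
          ≤ (m.factorial : ℝ) * (Real.exp 1 * k * (2*(k:ℝ))^(k-1)) * z^(-(3/2) : ℝ) := by
        calc AA k (n+2) * ((m.factorial : ℝ) / z^(m+1))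
            ≤ (Real.exp 1 * k * (Real.log z)^(k-1) / z) * ((m.factorial : ℝ) / z) := by
              apply mul_le_mul hAle hfrac (by positivity)
              positivity
          _ ≤ (Real.exp 1 * k * ((2*(k:ℝ))^(k-1) * z^((1:ℝ)/2)) / z) * ((m.factorial : ℝ) / z) := by
              gcongr
          _ = (m.factorial : ℝ) * (Real.exp 1 * k * (2*(k:ℝ))^(k-1)) * (z^((1:ℝ)/2) / (z*z)) := by
              ring
          _ = (m.factorial : ℝ) * (Real.exp 1 * k * (2*(k:ℝ))^(k-1)) * z^(-(3/2) : ℝ) := by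
              congr 1
              rw [show z*z = z^((2:ℝ)) by
                rw [show ((2:ℝ)) = ((2:ℕ):ℝ) by norm_num, Real.rpow_natCast]; ring,
                ← Real.rpow_sub hz0]
              norm_num
      calc AA k (n+2) * ((m.factorial : ℝ) / z^(m+1))
          ≤ (m.factorial : ℝ) * (Real.exp 1 * k * (2*(k:ℝ))^(k-1)) * z^(-(3/2) : ℝ) := hmain
        _ ≤ C * z^(-(3/2) : ℝ) := by
            apply mul_le_mul_of_nonneg_right _ (by positivity)
            rw [hC]
            nlinarith [Nat.cast_nonneg (α := ℝ) m.factorial]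

end stmt15Aux

section stmt15Main
open Set MeasureTheory

/-- For integers `k ≥ 1` and `m ≥ 0`, the integral
`Ω(k,m) = ∫_0^1 lnᵏ(1-x) lnᵐ(x)/x dx` satisfies
`Ω(k,m) = (-1)^{m+k} m! k! Σ_{n=k}^∞ |S_1(n,k)|/(n!·n^{m+1})`, where `S_1(n,l)` are the
Stirling numbers of the first kind, defined by
`x(x-1)⋯(x-n+1) = Σ_{l=1}^n S_1(n,l) x^l`. -/
theorem stmt15 (S1 : ℕ → ℕ → ℝ)
    (hS1 : ∀ n : ℕ, 1 ≤ n → ∀ x : ℝ,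
      ∏ i ∈ Finset.range n, (x - (i : ℝ)) = ∑ l ∈ Finset.Icc 1 n, S1 n l * x ^ l)
    (k m : ℕ) (hk : 1 ≤ k) :
    ∫ x in (0:ℝ)..1, (Real.log (1 - x)) ^ k * (Real.log x) ^ m / x =
      (-1 : ℝ) ^ (m + k) * (m.factorial : ℝ) * (k.factorial : ℝ) *
        ∑' n : ℕ, |S1 (n + k) k| /
          (((n + k).factorial : ℝ) * ((n : ℝ) + k) ^ (m + 1)) := by
  have hS1eq : ∀ n : ℕ, |S1 (n+k) k| = aa (n+k) k := fun n => by
    rw [← sg_eq_S1 S1 hS1 hk (by omega), abs_sg]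
  set v : ℕ → ℝ := fun n => AA k n * ((m.factorial : ℝ) / (n:ℝ)^(m+1)) with hv
  have hvsum : Summable v := summable_v hk m
  set F : ℕ → ℝ → ℝ := fun n x => AA k n * (x^(n-1) * (-Real.log x)^m) with hF
  have hFint : ∀ n, IntegrableOn (F n) (Set.Ioc 0 1) := by
    intro n
    match n with
    | 0 =>
      have h0 : F 0 = fun _ : ℝ => (0:ℝ) := by
        funext x; rw [hF]; simp [AA_zero hk]
      rw [h0]
      exact integrableOn_zero
    | (n+1) => exact (key_int_integrable (n+1) m (by omega)).const_mul _
  have hFval : ∀ n, (∫ x in Set.Ioc (0:ℝ) 1, F n x) = v n := by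
    intro n
    match n with
    | 0 =>
      rw [hv]
      simp [hF, AA_zero hk]
    | (n+1) =>
      have hkey := key_int_val (n+1) m (by omega)
      calc ∫ x in Set.Ioc (0:ℝ) 1, F (n+1) x
          = ∫ x in Set.Ioc (0:ℝ) 1, AA k (n+1) * (x^(n+1-1) * (-Real.log x)^m) := rfl
        _ = AA k (n+1) * ∫ x in Set.Ioc (0:ℝ) 1, x^(n+1-1) * (-Real.log x)^m :=
            MeasureTheory.integral_const_mul _ _
        _ = v (n+1) := by rw [hkey]
  have hFnorm : ∀ n, (∫ x in Set.Ioc (0:ℝ) 1, ‖F n x‖) = v n := by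
    intro n
    rw [← hFval n]
    refine MeasureTheory.setIntegral_congr_fun measurableSet_Ioc fun x hx => ?_
    have hx0 : 0 < x := hx.1
    have hlog : 0 ≤ -Real.log x := neg_nonneg.2 (Real.log_nonpos hx0.le hx.2)
    rw [Real.norm_eq_abs, abs_of_nonneg]
    exact mul_nonneg (AA_nonneg k n)
      (mul_nonneg (pow_nonneg hx0.le _) (pow_nonneg hlog _))
  have hHS := MeasureTheory.hasSum_integral_of_summable_integral_norm
    (μ := MeasureTheory.volume.restrict (Set.Ioc 0 1)) hFint
    (by simpa only [hFnorm] using hvsum)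
  have hHSv : HasSum v (∫ x in Set.Ioc (0:ℝ) 1, ∑' n, F n x) :=
    hHS.congr_fun (fun n => (hFval n).symm)
  have hpt : ∀ x ∈ Set.Ioo (0:ℝ) 1,
      (∑' n, F n x) = (-Real.log (1-x))^k * ((-Real.log x)^m / x) := by
    intro x hx
    have hs := hasSum_AA hk hx.1.le hx.2
    have hs2 := hs.mul_right ((-Real.log x)^m / x)
    have heq : ∀ n, AA k n * x^n * ((-Real.log x)^m / x) = F n x := by
      intro n
      match n with
      | 0 => rw [hF]; simp [AA_zero hk]
      | (n+1) =>
        rw [hF]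
        simp only [Nat.add_sub_cancel]
        rw [pow_succ]
        have hx0 : x ≠ 0 := ne_of_gt hx.1
        field_simp
    exact ((hs2.congr_fun (fun n => (heq n).symm))).tsum_eq
  have hsign : ∀ x ∈ Set.Ioo (0:ℝ) 1,
      (Real.log (1 - x)) ^ k * (Real.log x) ^ m / x
        = (-1:ℝ)^(m+k) * ((-Real.log (1-x))^k * ((-Real.log x)^m / x)) := by
    intro x hx
    have h : ((-1:ℝ))^(m+k) * ((-Real.log (1-x))^k * ((-Real.log x)^m / x))
        = (-(-Real.log (1-x)))^k * (-(-Real.log x))^m / x := by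
      rw [neg_pow (-Real.log (1-x)) k, neg_pow (-Real.log x) m, pow_add]; ring
    rw [h, neg_neg, neg_neg]
  have hmain : ∫ x in (0:ℝ)..1, (Real.log (1 - x)) ^ k * (Real.log x) ^ m / x
      = (-1:ℝ)^(m+k) * ∑' n, v n := by
    rw [intervalIntegral.integral_of_le zero_le_one]
    rw [← MeasureTheory.setIntegral_congr_set Ioo_ae_eq_Ioc]
    rw [MeasureTheory.setIntegral_congr_fun measurableSet_Ioo
      (fun x hx => by rw [hsign x hx, ← hpt x hx])]
    rw [MeasureTheory.integral_const_mul]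
    congr 1
    rw [MeasureTheory.setIntegral_congr_set Ioo_ae_eq_Ioc]
    exact hHSv.tsum_eq.symm
  rw [hmain]
  have hzero : ∀ i ∈ Finset.range k, v i = 0 := by
    intro i hi
    rw [hv]
    simp [AA_zero (Finset.mem_range.1 hi)]
  have hshift : ∑' n, v n = ∑' n, v (n+k) := by
    rw [← Summable.sum_add_tsum_nat_add k hvsum, Finset.sum_eq_zero hzero, zero_add]
  have hterm : ∀ n : ℕ, v (n+k)
      = (m.factorial : ℝ) * (k.factorial : ℝ) *
        (|S1 (n + k) k| / (((n + k).factorial : ℝ) * ((n : ℝ) + k) ^ (m + 1))) := by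
    intro n
    rw [hv, hS1eq n]
    simp only [AA]
    rw [show ((n+k : ℕ):ℝ) = (n:ℝ) + k by push_cast; ring]
    field_simp
  rw [hshift]
  rw [show (fun n => v (n+k)) = fun n : ℕ =>
    (m.factorial : ℝ) * (k.factorial : ℝ) *
      (|S1 (n + k) k| / (((n + k).factorial : ℝ) * ((n : ℝ) + k) ^ (m + 1)))
    from funext hterm]
  rw [tsum_mul_left]
  ring

end stmt15Main
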